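/- Let Q : ℝ³ → ℝ be a Schwartz function. Then ∫_{ℝ³} ∇( x·∇Q(x) + 2Q(x) ) · ∇Q(x) dx = (3/2) ∫_{ℝ³} |∇Q(x)|² dx. -/

import Mathlib

open MeasureTheory
open scoped SchwartzMap RealInnerProductSpace

noncomputable section

abbrev R3 := EuclideanSpace ℝ (Fin 3)

namespace Stmt18Aux

open SchwartzMap

lemma schwartzTemperate (f : 𝓢(R3, ℝ)) : Function.HasTemperateGrowth ⇑f := by
  refine ⟨f.smooth', fun n => ⟨0, SchwartzMap.seminorm ℝ 0 n f, fun x => ?_⟩⟩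
  simpa using f.norm_iteratedFDeriv_le_seminorm ℝ n x

def e3 (i : Fin 3) : R3 := EuclideanSpace.single i (1:ℝ)

lemma sum_coord_smul (v : R3) : ∑ i, v i • e3 i = v := by
  ext j
  have : (∑ i, v i • e3 i) j = ∑ i, (v i • e3 i) j :=
    by rw [WithLp.ofLp_sum]; exact Finset.sum_apply j Finset.univ _
  rw [this]
  simp [e3, EuclideanSpace.single_apply]

lemma clm_apply_eq_sum (L : R3 →L[ℝ] ℝ) (v : R3) : L v = ∑ i, v i * L (e3 i) := by
  conv_lhs => rw [← sum_coord_smul v]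
  rw [map_sum]
  simp [smul_eq_mul]

lemma inner_grad (f : R3 → ℝ) (x v : R3) : ⟪gradient f x, v⟫ = fderiv ℝ f x v := by
  rw [gradient, InnerProductSpace.toDual_symm_apply]

lemma grad_coord (f : R3 → ℝ) (x : R3) (i : Fin 3) : gradient f x i = fderiv ℝ f x (e3 i) := by
  rw [← inner_grad]
  rw [e3, EuclideanSpace.inner_single_right]; simp

lemma inner_grad_grad (f : R3 → ℝ) (Q : R3 → ℝ) (x : R3) :
    ⟪gradient f x, gradient Q x⟫ = ∑ i, fderiv ℝ f x (e3 i) * fderiv ℝ Q x (e3 i) := by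
  rw [inner_grad, clm_apply_eq_sum (fderiv ℝ f x) (gradient Q x)]
  exact Finset.sum_congr rfl fun i _ => by rw [grad_coord]; ring

lemma norm_grad_sq (Q : R3 → ℝ) (x : R3) :
    ‖gradient Q x‖ ^ 2 = ∑ i, fderiv ℝ Q x (e3 i) * fderiv ℝ Q x (e3 i) := by
  rw [← real_inner_self_eq_norm_sq, PiLp.inner_apply]
  exact Finset.sum_congr rfl fun i _ => by
    rw [grad_coord]; simp [grad_coord Q x i, sq]

/-- Product of two Schwartz functions, as a Schwartz function. -/
def mulS (f g : 𝓢(R3, ℝ)) : 𝓢(R3, ℝ) :=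
  SchwartzMap.bilinLeftCLM (ContinuousLinearMap.mul ℝ ℝ) (schwartzTemperate g) f

lemma mulS_apply (f g : 𝓢(R3, ℝ)) (x : R3) : mulS f g x = f x * g x := rfl

/-- Multiplication by the `j`-th coordinate, as a Schwartz function. -/
def coordS (j : Fin 3) (f : 𝓢(R3, ℝ)) : 𝓢(R3, ℝ) :=
  SchwartzMap.bilinLeftCLM (ContinuousLinearMap.mul ℝ ℝ)
    ((EuclideanSpace.proj (𝕜 := ℝ) j : R3 →L[ℝ] ℝ).hasTemperateGrowth) f

lemma coordS_apply (j : Fin 3) (f : 𝓢(R3, ℝ)) (x : R3) : coordS j f x = f x * x j := rfl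

lemma int_coord_pderiv (h : 𝓢(R3, ℝ)) (j : Fin 3) :
    Integrable (fun x : R3 => x j * fderiv ℝ (⇑h) x (e3 j)) volume := by
  exact ((coordS j (LineDeriv.lineDerivOpCLM ℝ 𝓢(R3, ℝ) (e3 j) h)).integrable (μ := volume)).congr
    (Filter.Eventually.of_forall fun x => mul_comm _ _)

/-- Integration by parts: `∫ xⱼ ∂ⱼ h = - ∫ h`. -/
lemma ibp (h : 𝓢(R3, ℝ)) (j : Fin 3) :
    ∫ x : R3, x j * fderiv ℝ (⇑h) x (e3 j) = - ∫ x : R3, h x := by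
  have hpa : ∀ x : R3, (EuclideanSpace.proj (𝕜 := ℝ) j : R3 →L[ℝ] ℝ) x = x j := fun _ => rfl
  have hfd : ∀ x : R3,
      fderiv ℝ (⇑(EuclideanSpace.proj (𝕜 := ℝ) j : R3 →L[ℝ] ℝ)) x (e3 j) = 1 := by
    intro x
    rw [ContinuousLinearMap.fderiv, hpa]
    simp [e3, EuclideanSpace.single_apply]
  have h1 : Integrable (fun x : R3 =>
      fderiv ℝ (⇑(EuclideanSpace.proj (𝕜 := ℝ) j : R3 →L[ℝ] ℝ)) x (e3 j) * h x) volume := by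
    simpa only [hfd, one_mul] using h.integrable (μ := volume)
  have h2 : Integrable (fun x : R3 =>
      (EuclideanSpace.proj (𝕜 := ℝ) j : R3 →L[ℝ] ℝ) x * fderiv ℝ (⇑h) x (e3 j)) volume := by
    exact (int_coord_pderiv h j).congr (Filter.Eventually.of_forall fun x => rfl)
  have h3 : Integrable (fun x : R3 =>
      (EuclideanSpace.proj (𝕜 := ℝ) j : R3 →L[ℝ] ℝ) x * h x) volume := by
    refine ((coordS j h).integrable (μ := volume)).congr
      (Filter.Eventually.of_forall fun x => ?_)
    show _ = (EuclideanSpace.proj (𝕜 := ℝ) j : R3 →L[ℝ] ℝ) x * _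
    rw [coordS_apply, hpa, mul_comm]
  have key := integral_mul_fderiv_eq_neg_fderiv_mul_of_integrable h1 h2 h3
    (fun x _ => (EuclideanSpace.proj (𝕜 := ℝ) j : R3 →L[ℝ] ℝ).differentiableAt) (fun x _ => h.differentiableAt)
  simp only [hfd, one_mul, hpa] at key
  exact key

variable (Q : 𝓢(R3, ℝ))

/-- The `i`-th partial derivative of `Q` as a Schwartz map. -/
def dQ (i : Fin 3) : 𝓢(R3, ℝ) := LineDeriv.lineDerivOpCLM ℝ 𝓢(R3, ℝ) (e3 i) Q

/-- `(∂ᵢ Q)²` as a Schwartz map. -/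
def gS (i : Fin 3) : 𝓢(R3, ℝ) := mulS (dQ Q i) (dQ Q i)

lemma dQ_apply (i : Fin 3) (x : R3) : dQ Q i x = fderiv ℝ (⇑Q) x (e3 i) := rfl

lemma gS_apply (i : Fin 3) (x : R3) :
    gS Q i x = fderiv ℝ (⇑Q) x (e3 i) * fderiv ℝ (⇑Q) x (e3 i) := rfl

lemma diff_fderiv : Differentiable ℝ (fderiv ℝ ⇑Q) := by
  have h := Q.smooth'
  rw [contDiff_infty_iff_fderiv] at h
  exact h.2.differentiable (by simp)

lemma fderiv_gS (i j : Fin 3) (x : R3) :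
    fderiv ℝ (⇑(gS Q i)) x (e3 j)
      = 2 * (fderiv ℝ (fderiv ℝ ⇑Q) x (e3 j) (e3 i)) * fderiv ℝ (⇑Q) x (e3 i) := by
  have hd2 : HasFDerivAt (fderiv ℝ ⇑Q) (fderiv ℝ (fderiv ℝ ⇑Q) x) x :=
    (diff_fderiv Q x).hasFDerivAt
  have hdi : HasFDerivAt (fun y : R3 => fderiv ℝ (⇑Q) y (e3 i))
      (((fderiv ℝ ⇑Q x).comp (0 : R3 →L[ℝ] R3)) +
        (fderiv ℝ (fderiv ℝ ⇑Q) x).flip (e3 i)) x :=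
    hd2.clm_apply (hasFDerivAt_const (e3 i) x)
  have hg : (⇑(gS Q i)) = fun y : R3 => fderiv ℝ (⇑Q) y (e3 i) * fderiv ℝ (⇑Q) y (e3 i) :=
    funext fun y => gS_apply Q i y
  have hmul := hdi.mul hdi
  rw [hg, show (fun y : R3 => fderiv ℝ (⇑Q) y (e3 i) * fderiv ℝ (⇑Q) y (e3 i))
    = (fun y : R3 => fderiv ℝ (⇑Q) y (e3 i)) * (fun y : R3 => fderiv ℝ (⇑Q) y (e3 i)) from rfl,
    hmul.fderiv]
  simp only [ContinuousLinearMap.add_apply, ContinuousLinearMap.smul_apply,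
    ContinuousLinearMap.comp_apply, ContinuousLinearMap.zero_apply, map_zero,
    ContinuousLinearMap.flip_apply, smul_eq_mul, zero_add]
  ring

lemma pointwise_i (x : R3) (i : Fin 3) :
    fderiv ℝ (fun y : R3 => fderiv ℝ (⇑Q) y y + 2 * Q y) x (e3 i) * fderiv ℝ (⇑Q) x (e3 i)
      = (1/2) * ∑ j, x j * fderiv ℝ (⇑(gS Q i)) x (e3 j) + 3 * gS Q i x := by
  have hd2 : HasFDerivAt (fderiv ℝ ⇑Q) (fderiv ℝ (fderiv ℝ ⇑Q) x) x :=
    (diff_fderiv Q x).hasFDerivAt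
  have h1 : HasFDerivAt (fun y : R3 => fderiv ℝ (⇑Q) y y)
      (((fderiv ℝ ⇑Q x).comp (ContinuousLinearMap.id ℝ R3)) +
        (fderiv ℝ (fderiv ℝ ⇑Q) x).flip x) x :=
    hd2.clm_apply (hasFDerivAt_id x)
  have h2 : HasFDerivAt (fun y : R3 => 2 * Q y) ((2:ℝ) • fderiv ℝ ⇑Q x) x :=
    (Q.differentiableAt.hasFDerivAt).const_mul 2
  have hF := (h1.add h2).fderiv
  rw [show (fun y : R3 => fderiv ℝ (⇑Q) y y + 2 * Q y)
    = (fun y : R3 => fderiv ℝ (⇑Q) y y) + (fun y : R3 => 2 * Q y) from rfl, hF]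
  have hsym : ∀ j, fderiv ℝ (fderiv ℝ ⇑Q) x (e3 j) (e3 i)
      = fderiv ℝ (fderiv ℝ ⇑Q) x (e3 i) (e3 j) :=
    fun j => second_derivative_symmetric (fun y => Q.differentiableAt.hasFDerivAt) hd2 _ _
  have hexp : fderiv ℝ (fderiv ℝ ⇑Q) x (e3 i) x
      = ∑ j, x j * fderiv ℝ (fderiv ℝ ⇑Q) x (e3 i) (e3 j) :=
    clm_apply_eq_sum _ x
  simp only [ContinuousLinearMap.add_apply, ContinuousLinearMap.smul_apply,
    ContinuousLinearMap.comp_apply, ContinuousLinearMap.coe_id', id_eq,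
    ContinuousLinearMap.flip_apply, smul_eq_mul]
  rw [hexp, gS_apply]
  have hsum : ∑ j, x j * fderiv ℝ (⇑(gS Q i)) x (e3 j)
      = ∑ j, x j * (2 * (fderiv ℝ (fderiv ℝ ⇑Q) x (e3 i) (e3 j)) * fderiv ℝ (⇑Q) x (e3 i)) :=
    Finset.sum_congr rfl fun j _ => by rw [fderiv_gS, hsym]
  rw [hsum, Finset.mul_sum]
  have : ∀ j ∈ Finset.univ, (1/2:ℝ) *
        (x j * (2 * (fderiv ℝ (fderiv ℝ ⇑Q) x (e3 i) (e3 j)) * fderiv ℝ (⇑Q) x (e3 i)))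
      = x j * fderiv ℝ (fderiv ℝ ⇑Q) x (e3 i) (e3 j) * fderiv ℝ (⇑Q) x (e3 i) :=
    fun j _ => by ring
  rw [Finset.sum_congr rfl this, add_mul, add_mul, Finset.sum_mul]
  ring

end Stmt18Aux

open Stmt18Aux

/-- `∫ ∇(x·∇Q + 2Q)·∇Q dx = (3/2) ∫ |∇Q|² dx` for Schwartz `Q`. -/
theorem stmt_18 (Q : 𝓢(R3, ℝ)) :
    (∫ x : R3, ⟪gradient (fun y : R3 => fderiv ℝ (⇑Q) y y + 2 * Q y) x, gradient (⇑Q) x⟫)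
      = (3 / 2) * ∫ x : R3, ‖gradient (⇑Q) x‖ ^ 2 := by
  -- integrability facts
  have hgInt : ∀ i, Integrable (fun x : R3 => gS Q i x) volume := fun i =>
    (gS Q i).integrable
  have hcInt : ∀ i j, Integrable (fun x : R3 => x j * fderiv ℝ (⇑(gS Q i)) x (e3 j)) volume :=
    fun i j => int_coord_pderiv (gS Q i) j
  have htermInt : ∀ i, Integrable
      (fun x : R3 => (1/2) * ∑ j, x j * fderiv ℝ (⇑(gS Q i)) x (e3 j) + 3 * gS Q i x) volume :=
    fun i => (((integrable_finset_sum Finset.univ (fun j _ => hcInt i j)).const_mul _).add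
      ((hgInt i).const_mul 3))
  -- pointwise identity for the left integrand
  have hpt : ∀ x : R3,
      ⟪gradient (fun y : R3 => fderiv ℝ (⇑Q) y y + 2 * Q y) x, gradient (⇑Q) x⟫
        = ∑ i, ((1/2) * ∑ j, x j * fderiv ℝ (⇑(gS Q i)) x (e3 j) + 3 * gS Q i x) := by
    intro x
    rw [inner_grad_grad]
    exact Finset.sum_congr rfl fun i _ => pointwise_i Q x i
  rw [integral_congr_ae (Filter.Eventually.of_forall hpt)]
  rw [integral_finset_sum Finset.univ (fun i _ => htermInt i)]
  -- compute each term
  have hterm : ∀ i, (∫ x : R3,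
      ((1/2) * ∑ j, x j * fderiv ℝ (⇑(gS Q i)) x (e3 j) + 3 * gS Q i x))
        = (3/2) * ∫ x : R3, gS Q i x := by
    intro i
    rw [integral_add ((integrable_finset_sum Finset.univ (fun j _ => hcInt i j)).const_mul _)
      ((hgInt i).const_mul 3), integral_const_mul, integral_const_mul,
      integral_finset_sum Finset.univ (fun j _ => hcInt i j)]
    have : ∀ j ∈ Finset.univ, (∫ x : R3, x j * fderiv ℝ (⇑(gS Q i)) x (e3 j))
        = - ∫ x : R3, gS Q i x := fun j _ => ibp (gS Q i) j
    rw [Finset.sum_congr rfl this]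
    simp [Finset.sum_const]
    ring
  rw [Finset.sum_congr rfl (fun i _ => hterm i)]
  -- right hand side
  have hRHS : (∫ x : R3, ‖gradient (⇑Q) x‖ ^ 2) = ∑ i, ∫ x : R3, gS Q i x := by
    rw [← integral_finset_sum Finset.univ (fun i _ => hgInt i)]
    refine integral_congr_ae (Filter.Eventually.of_forall fun x => ?_)
    show ‖gradient (⇑Q) x‖ ^ 2 = _
    rw [norm_grad_sq]
    exact Finset.sum_congr rfl fun i _ => (gS_apply Q i x).symm
  rw [hRHS, Finset.mul_sum]
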